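/- Let μ, h, h', φ, φ' : ℤ → ℝ and a, b ∈ ℝ with a ≠ 0 satisfy μ(n) > 0 for all n. For ψ : ℤ → ℂ define (Aψ)(n) := h(n)ψ(n+1)/μ(n) + φ(n)ψ(n), (A†ψ)(n) := h(n−1)ψ(n−1)/μ(n) + φ(n)ψ(n), (A'ψ)(n) := h'(n)ψ(n+1)/μ(n) + φ'(n)ψ(n), and (A'†ψ)(n) := h'(n−1)ψ(n−1)/μ(n) + φ'(n)ψ(n). Then the identity (A(A†ψ))(n) = a·(A'†(A'ψ))(n) + b·ψ(n), for all ψ : ℤ → ℂ and all n ∈ ℤ, holds if and only if for all n ∈ ℤ: (i) h'(n)·φ'(n) = (1/a)·h(n)·φ(n+1); and (ii) a·h'(n−1)²/(μ(n)·μ(n−1)) + a·φ'(n)² + b = h(n)²/(μ(n+1)·μ(n)) + φ(n)². -/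

import Mathlib

/-- `(Aψ)(n) = h(n)ψ(n+1)/μ(n) + φ(n)ψ(n)`. -/
noncomputable def opA (μ h φ : ℤ → ℝ) (ψ : ℤ → ℂ) (n : ℤ) : ℂ :=
  ((h n : ℝ) : ℂ) * ψ (n + 1) / ((μ n : ℝ) : ℂ) + ((φ n : ℝ) : ℂ) * ψ n

/-- `(A†ψ)(n) = h(n-1)ψ(n-1)/μ(n) + φ(n)ψ(n)`, the formal adjoint of `opA` in the
trivial-weight case `ρ ≡ 1`, `η ≡ 1`. -/
noncomputable def opAdag (μ h φ : ℤ → ℝ) (ψ : ℤ → ℂ) (n : ℤ) : ℂ :=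
  ((h (n - 1) : ℝ) : ℂ) * ψ (n - 1) / ((μ n : ℝ) : ℂ) + ((φ n : ℝ) : ℂ) * ψ n

/-- Specialization of the factorization proposition to trivial weight functions:
the intertwining relation `A A† = a A'† A' + b` is equivalent to the relations
(i) `h'(n)φ'(n) = (1/a)·h(n)·φ(n+1)` and
(ii) `a·h'(n-1)²/(μ(n)μ(n-1)) + a·φ'(n)² + b = h(n)²/(μ(n+1)μ(n)) + φ(n)²`. -/
theorem statement_11
    (μ h h' φ φ' : ℤ → ℝ) (a b : ℝ) (ha : a ≠ 0) (hμ : ∀ n, 0 < μ n) :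
    (∀ (ψ : ℤ → ℂ) (n : ℤ),
        opA μ h φ (opAdag μ h φ ψ) n =
          (a : ℂ) * opAdag μ h' φ' (opA μ h' φ' ψ) n + (b : ℂ) * ψ n) ↔
      (∀ n : ℤ,
        (h' n * φ' n = (1 / a) * (h n * φ (n + 1))) ∧
        (a * (h' (n - 1)) ^ 2 / (μ n * μ (n - 1)) + a * (φ' n) ^ 2 + b =
          (h n) ^ 2 / (μ (n + 1) * μ n) + (φ n) ^ 2)) := by
  have hμc : ∀ n : ℤ, ((μ n : ℝ) : ℂ) ≠ 0 := fun n => by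
    exact_mod_cast (hμ n).ne'
  have hac : ((a : ℝ) : ℂ) ≠ 0 := by exact_mod_cast ha
  constructor
  · intro H n
    have hμn := (hμ n).ne'
    have hμn1 := (hμ (n+1)).ne'
    have hμm1 := (hμ (n-1)).ne'
    have m0 := hμc n
    have m1 := hμc (n+1)
    have mm1 := hμc (n-1)
    constructor
    · have T := H (fun m => if m = n+1 then 1 else 0) n
      have e1 : n ≠ n + 1 := by omega
      have e2 : n - 1 ≠ n + 1 := by omega
      simp only [opA, opAdag, show n+1-1 = n by ring, show n-1+1 = n by ring,
        if_pos rfl, if_true, if_neg e1, if_neg e2] at T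
      have key : ((h' n * φ' n : ℝ) : ℂ) = (((1/a) * (h n * φ (n+1)) : ℝ) : ℂ) := by
        push_cast
        field_simp at T ⊢
        apply mul_left_cancel₀ (mul_ne_zero m1 mm1)
        linear_combination -T
      exact_mod_cast key
    · have T := H (fun m => if m = n then 1 else 0) n
      have e1 : n + 1 ≠ n := by omega
      have e2 : n - 1 ≠ n := by omega
      simp only [opA, opAdag, show n+1-1 = n by ring, show n-1+1 = n by ring,
        if_pos rfl, if_true, if_neg e1, if_neg e2] at T
      have key : ((a * (h' (n - 1)) ^ 2 / (μ n * μ (n - 1)) + a * (φ' n) ^ 2 + b : ℝ) : ℂ)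
          = (((h n) ^ 2 / (μ (n + 1) * μ n) + (φ n) ^ 2 : ℝ) : ℂ) := by
        push_cast
        field_simp at T ⊢
        linear_combination -T
      exact_mod_cast key
  · intro H ψ n
    have c1 := congrArg (Complex.ofReal) (H n).1
    have c1' := congrArg (Complex.ofReal) (H (n-1)).1
    have c2 := congrArg (Complex.ofReal) (H n).2
    push_cast at c1 c1' c2
    have m0 := hμc n
    have m1 := hμc (n+1)
    have mm1 := hμc (n-1)
    rw [show n - 1 + 1 = n by ring] at c1'
    simp only [opA, opAdag, show n+1-1 = n by ring, show n-1+1 = n by ring]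
    field_simp at c1 c1' c2 ⊢
    linear_combination (-ψ (n+1) * (μ (n+1) : ℂ) * (μ (n-1) : ℂ)) * c1
      + (-ψ (n-1) * (μ (n+1) : ℂ) * (μ (n-1) : ℂ)) * c1'
      + (-ψ n) * c2
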